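/- Let $\kk$ be a field of characteristic $p > 0$, $G$ a finite $p$-group acting linearly on a finite-dimensional $\kk$-vector space $V$ with dual basis $x_0, \ldots, x_n$ of $V^*$ in which $x_0$ is a terminal variable. Define $d = \deg(x_0)$ to be the minimal positive integer such that there exists $f \in \kk[V]^G$ which, as a polynomial in $x_0$, is monic of degree $d$. Then $d$ is a power of $p$. -/

import Mathlib

open Polynomial

private lemma hasseDeriv_map_comm {R S : Type*} [CommSemiring R] [CommSemiring S]
    (φ : R →+* S) (e : ℕ) (f : R[X]) :
    Polynomial.hasseDeriv e (f.map φ) = (Polynomial.hasseDeriv e f).map φ := by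
  ext m
  simp [Polynomial.hasseDeriv_coeff, Polynomial.coeff_map]

private lemma hasseDeriv_taylor_comm {R : Type*} [CommSemiring R] (c : R) (e : ℕ) (f : R[X]) :
    Polynomial.hasseDeriv e (Polynomial.taylor c f)
      = Polynomial.taylor c (Polynomial.hasseDeriv e f) := by
  ext m
  rw [Polynomial.hasseDeriv_coeff, Polynomial.taylor_coeff, Polynomial.taylor_coeff]
  have h := LinearMap.congr_fun (Polynomial.hasseDeriv_comp (R := R) m e) f
  simp only [LinearMap.comp_apply, LinearMap.smul_apply] at h
  rw [h, Polynomial.eval_smul, nsmul_eq_mul, Nat.choose_symm_add (a := m) (b := e)]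

private lemma lucas_step {p d r : ℕ} (hp : p.Prime) (h1 : p ^ r ≤ d) (h2 : d < p ^ (r + 1)) :
    ¬ p ∣ d.choose (p ^ r) := by
  haveI : Fact p.Prime := ⟨hp⟩
  have hlucas := Choose.choose_modEq_prod_range_choose_nat (p := p) (n := d) (k := p ^ r)
    (a := r + 1) h2 (Nat.pow_lt_pow_succ hp.one_lt)
  have hdiv_lt : d / p ^ r < p := by
    rw [Nat.div_lt_iff_lt_mul (pow_pos hp.pos r)]
    calc d < p ^ (r + 1) := h2
    _ = p * p ^ r := by ring
  have hdiv_pos : 0 < d / p ^ r := Nat.one_le_div_iff (pow_pos hp.pos r) |>.mpr h1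
  have hprod : (∏ i ∈ Finset.range (r + 1), (d / p ^ i % p).choose (p ^ r / p ^ i % p))
      = d / p ^ r := by
    rw [Finset.prod_range_succ]
    have h0 : ∀ i ∈ Finset.range r, (d / p ^ i % p).choose (p ^ r / p ^ i % p) = 1 := by
      intro i hi
      rw [Finset.mem_range] at hi
      have he : p ^ r / p ^ i = p ^ (r - i) := Nat.pow_div hi.le hp.pos
      have hdvd : p ∣ p ^ (r - i) := dvd_pow_self p (Nat.sub_ne_zero_of_lt hi)
      rw [he, Nat.mod_eq_zero_of_dvd hdvd, Nat.choose_zero_right]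
    rw [Finset.prod_congr rfl h0, Finset.prod_const_one, one_mul,
      Nat.div_self (pow_pos hp.pos r), Nat.mod_eq_of_lt hp.one_lt,
      Nat.choose_one_right, Nat.mod_eq_of_lt hdiv_lt]
  rw [hprod] at hlucas
  intro hdvd
  have : d.choose (p ^ r) % p = d / p ^ r % p := hlucas
  rw [Nat.mod_eq_zero_of_dvd hdvd, Nat.mod_eq_of_lt hdiv_lt] at this
  exact absurd this.symm hdiv_pos.ne'

/-- For a finite `p`-group `G` acting linearly on `V` with terminal variable `x₀`,
the degree `d = deg(x₀)` (the minimal positive degree in `x₀` of an invariant that is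
monic as a polynomial in `x₀`) is a power of `p`. -/
theorem degree_of_terminal_variable_is_p_power {p : ℕ} (hp : p.Prime) (k : Type*) [Field k]
    [CharP k p] (G : Type*) [Group G] [Finite G] (hG : IsPGroup p G) (n : ℕ)
    (ρ : G →* (Polynomial (MvPolynomial (Fin n) k) ≃ₐ[k] Polynomial (MvPolynomial (Fin n) k)))
    (hterm : ∀ (g : G) (j : Fin n), ∃ ℓ : MvPolynomial (Fin n) k,
      ℓ.IsHomogeneous 1 ∧ ρ g (Polynomial.C (MvPolynomial.X j)) = Polynomial.C ℓ)
    (hX : ∀ g : G, ∃ ℓ : MvPolynomial (Fin n) k,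
      ℓ.IsHomogeneous 1 ∧ ρ g Polynomial.X = Polynomial.X + Polynomial.C ℓ)
    (d : ℕ) (hd0 : 0 < d)
    -- there is an invariant, monic of degree `d` as a polynomial in `x₀`
    (hdex : ∃ f : Polynomial (MvPolynomial (Fin n) k),
      (∀ g : G, ρ g f = f) ∧ f.Monic ∧ f.natDegree = d)
    -- and `d` is minimal with this property
    (hdmin : ∀ e : ℕ, 0 < e → (∃ f : Polynomial (MvPolynomial (Fin n) k),
      (∀ g : G, ρ g f = f) ∧ f.Monic ∧ f.natDegree = e) → d ≤ e) :
    ∃ r : ℕ, d = p ^ r := by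
  by_contra hnot
  push_neg at hnot
  obtain ⟨f, hfinv, hfmon, hfdeg⟩ := hdex
  set r := Nat.log p d with hr
  have hle : p ^ r ≤ d := Nat.pow_log_le_self p hd0.ne'
  have hlt : d < p ^ (r + 1) := Nat.lt_pow_succ_log_self hp.one_lt d
  set e := p ^ r with he
  have helt : e < d := lt_of_le_of_ne hle (fun h => hnot r h.symm)
  have hnd : ¬ p ∣ d.choose e := lucas_step hp hle hlt
  haveI : CharP (MvPolynomial (Fin n) k) p := charP_of_injective_algebraMap' k p
  set b : k := (d.choose e : k) with hb
  have hbne : b ≠ 0 := fun h => hnd ((CharP.cast_eq_zero_iff k p _).mp h)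
  set F : Polynomial (MvPolynomial (Fin n) k) :=
    Polynomial.C (MvPolynomial.C b⁻¹) * Polynomial.hasseDeriv e f with hF
  set m := d - e with hm
  have hme : m + e = d := Nat.sub_add_cancel helt.le
  have hcoeff : (Polynomial.hasseDeriv e f).coeff m = MvPolynomial.C b := by
    rw [Polynomial.hasseDeriv_coeff, hme,
      show f.coeff d = 1 from hfdeg ▸ hfmon.coeff_natDegree, mul_one, hb]
    exact (map_natCast (MvPolynomial.C (σ := Fin n) (R := k)) _).symm
  have hFcoeff : F.coeff m = 1 := by
    rw [hF, Polynomial.coeff_C_mul, hcoeff, ← map_mul, inv_mul_cancel₀ hbne, map_one]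
  have hFdeg : F.natDegree = m := by
    apply le_antisymm
    · refine (Polynomial.natDegree_mul_le).trans ?_
      rw [Polynomial.natDegree_C, zero_add]
      exact (Polynomial.natDegree_hasseDeriv_le f e).trans (by rw [hfdeg])
    · exact Polynomial.le_natDegree_of_ne_zero (by rw [hFcoeff]; exact one_ne_zero)
  have hFmon : F.Monic := by
    rw [Polynomial.Monic, Polynomial.leadingCoeff, hFdeg, hFcoeff]
  have hFinv : ∀ g : G, ρ g F = F := by
    intro g
    obtain ⟨ℓX, -, hℓX⟩ := hX g
    choose ℓ hℓhom hℓ using hterm g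
    set φ : MvPolynomial (Fin n) k →ₐ[k] MvPolynomial (Fin n) k := MvPolynomial.aeval ℓ with hφ
    have hC : ∀ q : MvPolynomial (Fin n) k,
        ρ g (Polynomial.C q) = Polynomial.C (φ q) := by
      intro q
      induction q using MvPolynomial.induction_on with
      | C a =>
        rw [show (Polynomial.C (MvPolynomial.C a) : Polynomial (MvPolynomial (Fin n) k))
            = algebraMap k _ a by
          rw [Polynomial.algebraMap_apply, MvPolynomial.algebraMap_eq]]
        rw [AlgEquiv.commutes, hφ, MvPolynomial.aeval_C, Polynomial.algebraMap_apply]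
      | add q1 q2 h1 h2 => rw [map_add, map_add, h1, h2, map_add, map_add]
      | mul_X q j ih => rw [map_mul, map_mul, map_mul, map_mul, ih, hℓ j, hφ,
          MvPolynomial.aeval_X]
    have hrho : ∀ q : Polynomial (MvPolynomial (Fin n) k),
        ρ g q = Polynomial.taylor ℓX (q.map (φ : MvPolynomial (Fin n) k →+* MvPolynomial (Fin n) k)) := by
      intro q
      induction q using Polynomial.induction_on' with
      | add q1 q2 h1 h2 => rw [map_add, h1, h2, Polynomial.map_add, map_add]
      | monomial N a =>
        rw [← Polynomial.C_mul_X_pow_eq_monomial, map_mul, map_pow, hC, hℓX,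
          Polynomial.map_mul, Polynomial.map_pow, Polynomial.map_C, Polynomial.map_X,
          Polynomial.taylor_apply]
        simp only [Polynomial.mul_comp, Polynomial.pow_comp, Polynomial.C_comp,
          Polynomial.X_comp, Polynomial.coe_aeval_eq_eval]
        rfl
    have hhd : ρ g (Polynomial.hasseDeriv e f) = Polynomial.hasseDeriv e f := by
      rw [hrho, ← hasseDeriv_map_comm, ← hasseDeriv_taylor_comm, ← hrho, hfinv]
    have hconst : ρ g (Polynomial.C (MvPolynomial.C b⁻¹)) = Polynomial.C (MvPolynomial.C b⁻¹) := by
      rw [show (Polynomial.C (MvPolynomial.C b⁻¹) : Polynomial (MvPolynomial (Fin n) k))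
          = algebraMap k _ b⁻¹ by
        rw [Polynomial.algebraMap_apply, MvPolynomial.algebraMap_eq]]
      exact AlgEquiv.commutes _ _
    rw [hF, map_mul, hconst, hhd]
  have hmpos : 0 < m := Nat.sub_pos_of_lt helt
  have hcon : d ≤ d - e := hm ▸ hdmin m hmpos ⟨F, hFinv, hFmon, hFdeg⟩
  have hepos : 0 < e := pow_pos hp.pos r
  exact absurd (hcon.trans_lt (Nat.sub_lt hd0 hepos)) (lt_irrefl d)
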